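/- Let a ≥ b ≥ c and x ≥ y ≥ z be real numbers with a+b+c = x+y+z = 0 and a^2+b^2+c^2 = x^2+y^2+z^2. Then at least one of the inequalities e^a+e^b+e^c ≤ e^x+e^y+e^z or e^{-a}+e^{-b}+e^{-c} ≤ e^{-x}+e^{-y}+e^{-z} holds; moreover both hold simultaneously if and only if a = x, b = y, and c = z. -/

import Mathlib

set_option maxHeartbeats 4000000
set_option maxRecDepth 100000

open Real Set

noncomputable def E4 (p q r t : ℝ) : ℝ :=
    Real.exp p/(p-q)/(p-r)/(p-t) + Real.exp q/(q-p)/(q-r)/(q-t)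
  + Real.exp r/(r-p)/(r-q)/(r-t) + Real.exp t/(t-p)/(t-q)/(t-r)



/-- If a cubic `A u³ + B u² + C u + D` agrees with `exp` at four points
`p < q < r < t`, then `A > 0`. -/
lemma cubic_interp_pos (A B C D p q r t : ℝ) (hpq : p < q) (hqr : q < r) (hrt : r < t)
    (hp : Real.exp p = A*p^3 + B*p^2 + C*p + D)
    (hq : Real.exp q = A*q^3 + B*q^2 + C*q + D)
    (hr : Real.exp r = A*r^3 + B*r^2 + C*r + D)
    (ht : Real.exp t = A*t^3 + B*t^2 + C*t + D) : 0 < A := by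
  set f0 : ℝ → ℝ := fun u => Real.exp u - (A*u^3 + B*u^2 + C*u + D) with hf0
  set f1 : ℝ → ℝ := fun u => Real.exp u - (3*A*u^2 + 2*B*u + C) with hf1
  set f2 : ℝ → ℝ := fun u => Real.exp u - (6*A*u + 2*B) with hf2
  have d0 : ∀ u : ℝ, HasDerivAt f0 (f1 u) u := by
    intro u
    have h := (Real.hasDerivAt_exp u).sub
      ((((hasDerivAt_pow 3 u).const_mul A).add ((hasDerivAt_pow 2 u).const_mul B)).add
        (((hasDerivAt_id u).const_mul C).add (hasDerivAt_const u D)))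
    convert h using 1
    · rfl
    · rfl
    · funext v; simp [hf0]; ring
    · simp [hf1]; push_cast; ring
  have d1 : ∀ u : ℝ, HasDerivAt f1 (f2 u) u := by
    intro u
    have h := (Real.hasDerivAt_exp u).sub
      (((hasDerivAt_pow 2 u).const_mul (3*A)).add
        (((hasDerivAt_id u).const_mul (2*B)).add (hasDerivAt_const u C)))
    convert h using 1
    · rfl
    · rfl
    · funext v; simp [hf1]; ring
    · simp [hf2]; push_cast; ring
  have d2 : ∀ u : ℝ, HasDerivAt f2 (Real.exp u - 6*A) u := by
    intro u
    have h := (Real.hasDerivAt_exp u).sub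
      (((hasDerivAt_id u).const_mul (6*A)).add (hasDerivAt_const u (2*B)))
    convert h using 1 <;>
      first
      | rfl
      | (push_cast; ring)
      | (funext v; simp [hf2]; ring)
  have c0 : ∀ s e : ℝ, ContinuousOn f0 (Icc s e) :=
    fun s e => (Real.continuous_exp.sub (by continuity)).continuousOn
  have c1 : ∀ s e : ℝ, ContinuousOn f1 (Icc s e) :=
    fun s e => (Real.continuous_exp.sub (by continuity)).continuousOn
  have c2 : ∀ s e : ℝ, ContinuousOn f2 (Icc s e) :=
    fun s e => (Real.continuous_exp.sub (by continuity)).continuousOn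
  have z0p : f0 p = 0 := by simp [hf0, hp]
  have z0q : f0 q = 0 := by simp [hf0, hq]
  have z0r : f0 r = 0 := by simp [hf0, hr]
  have z0t : f0 t = 0 := by simp [hf0, ht]
  obtain ⟨c1', hc1, hz1⟩ := exists_hasDerivAt_eq_zero hpq (c0 p q) (by rw [z0p, z0q])
    (fun u _ => d0 u)
  obtain ⟨c2', hc2, hz2⟩ := exists_hasDerivAt_eq_zero hqr (c0 q r) (by rw [z0q, z0r])
    (fun u _ => d0 u)
  obtain ⟨c3', hc3, hz3⟩ := exists_hasDerivAt_eq_zero hrt (c0 r t) (by rw [z0r, z0t])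
    (fun u _ => d0 u)
  have h12 : c1' < c2' := lt_trans hc1.2 hc2.1
  have h23 : c2' < c3' := lt_trans hc2.2 hc3.1
  obtain ⟨d1', hd1, hw1⟩ := exists_hasDerivAt_eq_zero h12 (c1 c1' c2') (by rw [hz1, hz2])
    (fun u _ => d1 u)
  obtain ⟨d2', hd2, hw2⟩ := exists_hasDerivAt_eq_zero h23 (c1 c2' c3') (by rw [hz2, hz3])
    (fun u _ => d1 u)
  have hdd : d1' < d2' := lt_trans hd1.2 hd2.1
  obtain ⟨e', he, hv⟩ := exists_hasDerivAt_eq_zero hdd (c2 d1' d2') (by rw [hw1, hw2])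
    (fun u _ => d2 u)
  have : Real.exp e' = 6*A := by linarith [hv]
  nlinarith [Real.exp_pos e']

set_option maxHeartbeats 2000000 in
lemma E4_pos (p q r t : ℝ) (h1 : p < q) (h2 : q < r) (h3 : r < t) : 0 < E4 p q r t := by
  have hpq : p - q ≠ 0 := sub_ne_zero.mpr h1.ne
  have hpr : p - r ≠ 0 := sub_ne_zero.mpr (h1.trans h2).ne
  have hpt : p - t ≠ 0 := sub_ne_zero.mpr ((h1.trans h2).trans h3).ne
  have hqr : q - r ≠ 0 := sub_ne_zero.mpr h2.ne
  have hqt : q - t ≠ 0 := sub_ne_zero.mpr (h2.trans h3).ne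
  have hrt : r - t ≠ 0 := sub_ne_zero.mpr h3.ne
  have hqp : q - p ≠ 0 := sub_ne_zero.mpr h1.ne'
  have hrp : r - p ≠ 0 := sub_ne_zero.mpr (h1.trans h2).ne'
  have hrq : r - q ≠ 0 := sub_ne_zero.mpr h2.ne'
  have htp : t - p ≠ 0 := sub_ne_zero.mpr ((h1.trans h2).trans h3).ne'
  have htq : t - q ≠ 0 := sub_ne_zero.mpr (h2.trans h3).ne'
  have htr : t - r ≠ 0 := sub_ne_zero.mpr h3.ne'
  refine cubic_interp_pos (E4 p q r t)
    (-(Real.exp p*(q+r+t)/((p-q)*(p-r)*(p-t)) + Real.exp q*(p+r+t)/((q-p)*(q-r)*(q-t))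
      + Real.exp r*(p+q+t)/((r-p)*(r-q)*(r-t)) + Real.exp t*(p+q+r)/((t-p)*(t-q)*(t-r))))
    (Real.exp p*(q*r+q*t+r*t)/((p-q)*(p-r)*(p-t)) + Real.exp q*(p*r+p*t+r*t)/((q-p)*(q-r)*(q-t))
      + Real.exp r*(p*q+p*t+q*t)/((r-p)*(r-q)*(r-t)) + Real.exp t*(p*q+p*r+q*r)/((t-p)*(t-q)*(t-r)))
    (-(Real.exp p*(q*r*t)/((p-q)*(p-r)*(p-t)) + Real.exp q*(p*r*t)/((q-p)*(q-r)*(q-t))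
      + Real.exp r*(p*q*t)/((r-p)*(r-q)*(r-t)) + Real.exp t*(p*q*r)/((t-p)*(t-q)*(t-r))))
    p q r t h1 h2 h3 ?_ ?_ ?_ ?_ <;>
  · unfold E4
    field_simp
    ring


lemma ident1 (a b c x y z s : ℝ)
    (hs1 : a + b + c = 0) (hs2 : x + y + z = 0)
    (hsq : a^2 + b^2 + c^2 = x^2 + y^2 + z^2)
    (hsP : x^2 + y^2 + z^2 = 6*s^2)
    (h1 : c < z) (h2 : z < y) (h3 : y < b) (h4 : b < a) (h5 : a < x) :
    Real.exp x + Real.exp y + Real.exp z - (Real.exp a + Real.exp b + Real.exp c)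
      = 3*(x*y*z - a*b*c)/(y-z)/(a-b) *
        ( (-z-s)*(s-b) * E4 c z b x + (-z-s)*(a-s) * E4 c z a x
        + (y+s)*(s-b) * E4 c y b x + (y+s)*(a-s) * E4 c y a x ) := by
  have ne0a : z - c ≠ 0 := sub_ne_zero.mpr (by linarith : c < z).ne'
  have ne0b : c - z ≠ 0 := sub_ne_zero.mpr (by linarith : c < z).ne
  have ne1a : y - c ≠ 0 := sub_ne_zero.mpr (by linarith : c < y).ne'
  have ne1b : c - y ≠ 0 := sub_ne_zero.mpr (by linarith : c < y).ne
  have ne2a : b - c ≠ 0 := sub_ne_zero.mpr (by linarith : c < b).ne'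
  have ne2b : c - b ≠ 0 := sub_ne_zero.mpr (by linarith : c < b).ne
  have ne3a : a - c ≠ 0 := sub_ne_zero.mpr (by linarith : c < a).ne'
  have ne3b : c - a ≠ 0 := sub_ne_zero.mpr (by linarith : c < a).ne
  have ne4a : x - c ≠ 0 := sub_ne_zero.mpr (by linarith : c < x).ne'
  have ne4b : c - x ≠ 0 := sub_ne_zero.mpr (by linarith : c < x).ne
  have ne5a : y - z ≠ 0 := sub_ne_zero.mpr (by linarith : z < y).ne'
  have ne5b : z - y ≠ 0 := sub_ne_zero.mpr (by linarith : z < y).ne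
  have ne6a : b - z ≠ 0 := sub_ne_zero.mpr (by linarith : z < b).ne'
  have ne6b : z - b ≠ 0 := sub_ne_zero.mpr (by linarith : z < b).ne
  have ne7a : a - z ≠ 0 := sub_ne_zero.mpr (by linarith : z < a).ne'
  have ne7b : z - a ≠ 0 := sub_ne_zero.mpr (by linarith : z < a).ne
  have ne8a : x - z ≠ 0 := sub_ne_zero.mpr (by linarith : z < x).ne'
  have ne8b : z - x ≠ 0 := sub_ne_zero.mpr (by linarith : z < x).ne
  have ne9a : b - y ≠ 0 := sub_ne_zero.mpr (by linarith : y < b).ne'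
  have ne9b : y - b ≠ 0 := sub_ne_zero.mpr (by linarith : y < b).ne
  have ne10a : a - y ≠ 0 := sub_ne_zero.mpr (by linarith : y < a).ne'
  have ne10b : y - a ≠ 0 := sub_ne_zero.mpr (by linarith : y < a).ne
  have ne11a : x - y ≠ 0 := sub_ne_zero.mpr (by linarith : y < x).ne'
  have ne11b : y - x ≠ 0 := sub_ne_zero.mpr (by linarith : y < x).ne
  have ne12a : a - b ≠ 0 := sub_ne_zero.mpr (by linarith : b < a).ne'
  have ne12b : b - a ≠ 0 := sub_ne_zero.mpr (by linarith : b < a).ne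
  have ne13a : x - b ≠ 0 := sub_ne_zero.mpr (by linarith : b < x).ne'
  have ne13b : b - x ≠ 0 := sub_ne_zero.mpr (by linarith : b < x).ne
  have ne14a : x - a ≠ 0 := sub_ne_zero.mpr (by linarith : a < x).ne'
  have ne14b : a - x ≠ 0 := sub_ne_zero.mpr (by linarith : a < x).ne
  have Cx : 3*(x*y*z - a*b*c)/(y-z)/(a-b)/(x-c) * ((-z-s)/(x-z) + (y+s)/(x-y)) * ((s-b)/(x-b) + (a-s)/(x-a)) = 1 := by
    field_simp
    linear_combination (b*x^2*y*z^2 - 1*b*x^2*y^2*z - 1*b*x^3*z^2 + b*x^3*y^2 + b*x^4*z - 1*b*x^4*y - 1*b*c*x*y^3 + (-3/2)*b*c*x^2*y^2 + (3/2)*b*c*x^3*y + b*c*x^4 - 1*b^2*x*y*z^2 + b^2*x*y^2*z + b^2*x*y^3 + b^2*x^2*z^2 + (1/2)*b^2*x^2*y^2 - 1*b^2*x^3*z + (-1/2)*b^2*x^3*y - 1*b^2*x^4 - 1*a*x^2*y*z^2 + a*x^2*y^2*z + a*x^3*z^2 - 1*a*x^3*y^2 - 1*a*x^4*z + a*x^4*y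 + a*c*x*y^3 + (3/2)*a*c*x^2*y^2 + (-3/2)*a*c*x^3*y - 1*a*c*x^4 + 3*a*b^2*z*s^2 - 3*a*b^2*y*s^2 + a*b^2*y*z^2 - 1*a*b^2*y^2*z - 1*a*b^2*x*z^2 + a*b^2*x*y^2 - 2*a*b^2*x^2*z + 2*a*b^2*x^2*y + a^2*x*y*z^2 - 1*a^2*x*y^2*z - 1*a^2*x*y^3 - 1*a^2*x^2*z^2 + (-1/2)*a^2*x^2*y^2 + a^2*x^3*z + (1/2)*a^2*x^3*y + a^2*x^4 - 3*a^2*b*z*s^2 + 3*a^2*b*y*s^2 - 1*a^2*b*y*z^2 + a^2*b*y^2*z + a^2*b*x*z^2 - 1*a^2*b*x*y^2 + 2*a^2*b*x^2*z - 2*a^2*b*x^2*y) * hs1 + (-3*b*x*y*z*s^2 + 6*b*x*y^2*s^2 + 3*b*x^2*y*s^2 - 2*b*x^3*y^2 - 1*b*x^5 + b^3*x*y*z - 2*b^3*x*y^2 - 1*b^3*x^2*z + 2*b^3*x^3 + 3*a*x*y*z*s^2 - 6*a*x*y^2*s^2 - 3*a*x^2*y*s^2 + 2*a*x^3*y^2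 + a*x^5 - 3*a*b^3*s^2 + a*b^3*y^2 + (3/2)*a*b^3*x*z + (-3/2)*a*b^3*x*y + (1/2)*a*b^3*x^2 - 1*a^3*x*y*z + 2*a^3*x*y^2 + a^3*x^2*z - 2*a^3*x^3 + 3*a^3*b*s^2 - 1*a^3*b*y^2 + (-3/2)*a^3*b*x*z + (3/2)*a^3*b*x*y + (-1/2)*a^3*b*x^2) * hs2 + (b*x*y^3 + (3/2)*b*x^2*y^2 + (-3/2)*b*x^3*y - 1*b*x^4 - 1*a*x*y^3 + (-3/2)*a*x^2*y^2 + (3/2)*a*x^3*y + a*x^4) * hsq + (b*x*y^3 + (3/2)*b*x^2*y^2 + (1/2)*b*x^3*y - 1*a*x*y^3 + (-3/2)*a*x^2*y^2 + (-1/2)*a*x^3*y - 1*a*b^3*y + (-1/2)*a*b^3*x + a^3*b*y + (1/2)*a^3*b*x) * hsP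
  have Cy : 3*(x*y*z - a*b*c)*(y+s)/(y-z)/(a-b)/(y-c)/(y-x) * ((s-b)/(y-b) + (a-s)/(y-a)) = 1 := by
    field_simp
    linear_combination (b*y^3*z - 1*b*y^4 - 1*b*x*y^2*z + b*x*y^3 + b*c*y^3 + (-1/2)*b*c*x*y^2 + (-1/2)*b*c*x^2*y - 1*b^2*y^2*z + b^2*x*y*z + (-1/2)*b^2*x*y^2 + (1/2)*b^2*x^2*y - 1*a*y^3*z + a*y^4 + a*x*y^2*z - 1*a*x*y^3 - 1*a*c*y^3 + (1/2)*a*c*x*y^2 + (1/2)*a*c*x^2*y - 3*a*b^2*s^2 + a*b^2*y*z + 2*a*b^2*y^2 - 1*a*b^2*x*z + a*b^2*x*y + a^2*y^2*z - 1*a^2*x*y*z + (1/2)*a^2*x*y^2 + (-1/2)*a^2*x^2*y + 3*a^2*b*s^2 - 1*a^2*b*y*z - 2*a^2*b*y^2 + a^2*b*x*z - 1*a^2*b*x*y) * hs1 + (-1*b*y^3*z + 3*b*x*y*s^2 - 1*b*x*y^3 + b^3*y^2 - 1*b^3*x*y + a*y^3*z - 3*a*x*y*s^2 + a*x*y^3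 + (1/2)*a*b^3*z + (-3/2)*a*b^3*y + (1/2)*a*b^3*x - 1*a^3*y^2 + a^3*x*y + (-1/2)*a^3*b*z + (3/2)*a^3*b*y + (-1/2)*a^3*b*x) * hs2 + (-1*b*y^3 + (1/2)*b*x*y^2 + (1/2)*b*x^2*y + a*y^3 + (-1/2)*a*x*y^2 + (-1/2)*a*x^2*y) * hsq + ((1/2)*b*x*y^2 + (1/2)*b*x^2*y + (-1/2)*a*x*y^2 + (-1/2)*a*x^2*y + (-1/2)*a*b^3 + (1/2)*a^3*b) * hsP
  have Cz : 3*(x*y*z - a*b*c)*(-z-s)/(y-z)/(a-b)/(z-c)/(z-x) * ((s-b)/(z-b) + (a-s)/(z-a)) = 1 := by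
    field_simp
    linear_combination (b*z^4 - 1*b*y*z^3 - 1*b*x*z^3 + b*x*y*z^2 + b*c*y^3 + (7/2)*b*c*x*y^2 + (7/2)*b*c*x^2*y + b*c*x^3 - 1*b^2*z^3 + b^2*y*z^2 - 1*b^2*y^3 + b^2*x*z^2 - 1*b^2*x*y*z + (-7/2)*b^2*x*y^2 + (-7/2)*b^2*x^2*y - 1*b^2*x^3 - 1*a*z^4 + a*y*z^3 + a*x*z^3 - 1*a*x*y*z^2 - 1*a*c*y^3 + (-7/2)*a*c*x*y^2 + (-7/2)*a*c*x^2*y - 1*a*c*x^3 + 3*a*b^2*s^2 - 2*a*b^2*z^2 - 1*a*b^2*y*z - 1*a*b^2*x*z + a*b^2*x*y + a^2*z^3 - 1*a^2*y*z^2 + a^2*y^3 - 1*a^2*x*z^2 + a^2*x*y*z + (7/2)*a^2*x*y^2 + (7/2)*a^2*x^2*y + a^2*x^3 - 3*a^2*b*s^2 + 2*a^2*b*z^2 + a^2*b*y*z + a^2*b*x*z - 1*a^2*b*x*y) * hs1 + (-1*b*z^4 + 2*b*y*z^3 - 2*b*y^2*z^2 + b*y^3*z - 1*b*y^4 + 2*b*x*z^3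 - 3*b*x*y*s^2 - 2*b*x*y*z^2 + b*x*y^2*z - 2*b*x*y^3 - 2*b*x^2*z^2 + b*x^2*y*z - 2*b*x^2*y^2 + b*x^3*z - 2*b*x^3*y - 1*b*x^4 + b^3*z^2 - 2*b^3*y*z + 2*b^3*y^2 - 2*b^3*x*z + 5*b^3*x*y + 2*b^3*x^2 + a*z^4 - 2*a*y*z^3 + 2*a*y^2*z^2 - 1*a*y^3*z + a*y^4 - 2*a*x*z^3 + 3*a*x*y*s^2 + 2*a*x*y*z^2 - 1*a*x*y^2*z + 2*a*x*y^3 + 2*a*x^2*z^2 - 1*a*x^2*y*z + 2*a*x^2*y^2 - 1*a*x^3*z + 2*a*x^3*y + a*x^4 + (3/2)*a*b^3*z + (-1/2)*a*b^3*y + (-1/2)*a*b^3*x - 1*a^3*z^2 + 2*a^3*y*z - 2*a^3*y^2 + 2*a^3*x*z - 5*a^3*x*y - 2*a^3*x^2 + (-3/2)*a^3*b*z + (1/2)*a^3*b*y + (1/2)*a^3*b*x) * hs2 + (-1*b*y^3 + (-7/2)*b*x*y^2 + (-7/2)*b*x^2*y - 1*b*x^3 + a*y^3 + (7/2)*a*x*y^2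 + (7/2)*a*x^2*y + a*x^3) * hsq + ((-1/2)*b*x*y^2 + (-1/2)*b*x^2*y + (1/2)*a*x*y^2 + (1/2)*a*x^2*y + (1/2)*a*b^3 + (-1/2)*a^3*b) * hsP
  have Ca : 3*(x*y*z - a*b*c)*(a-s)/(y-z)/(a-b)/(a-c)/(a-x) * ((-z-s)/(a-z) + (y+s)/(a-y)) = -1 := by
    field_simp
    linear_combination (c*x*y^3 + (3/2)*c*x^2*y^2 + (1/2)*c*x^3*y + b*x*y*z^2 - 1*b*x*y^2*z - 1*b*x*y^3 + (-3/2)*b*x^2*y^2 + (-1/2)*b*x^3*y - 1*a*x*y*z^2 + a*x*y^2*z - 1*a*x*y^3 + (-3/2)*a*x^2*y^2 + (-1/2)*a*x^3*y - 3*a*b*z*s^2 + 3*a*b*y*s^2 - 1*a*b*y*z^2 + a*b*y^2*z - 1*a*b*x*z^2 + a*b*x*y^2 + a^2*y*z^2 - 1*a^2*y^2*z + a^2*x*z^2 - 1*a^2*x*y^2 + a^2*b*z^2 - 1*a^2*b*y^2 + a^2*b*x*z - 1*a^2*b*x*y - 1*a^3*z^2 + a^3*y^2 - 1*a^3*x*z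 + a^3*x*y - 2*a^3*c*y - 1*a^3*c*x + 2*a^3*b*z + a^3*b*x + a^4*z + a^4*y + a^4*x) * hs1 + (3*x*y*z*s^2 - 6*x*y^2*s^2 - 3*x^2*y*s^2 - 1*b^2*x*y*z + 2*b^2*x*y^2 + b^2*x^2*y - 1*a*b*x*y*z + 2*a*b*x*y^2 + a*b*x^2*y + 3*a*b^2*s^2 - 1*a*b^2*y^2 + (1/2)*a*b^2*x*z + (-1/2)*a*b^2*x*y + (-1/2)*a*b^2*x^2 - 1*a^2*x*y*z + 2*a^2*x*y^2 + a^2*x^2*y + 3*a^2*b*s^2 - 1*a^2*b*y^2 + (1/2)*a^2*b*x*z + (-1/2)*a^2*b*x*y + (-1/2)*a^2*b*x^2 - 1*a^2*b^2*z + a^2*b^2*y + 2*a^3*y^2 - 1*a^3*x*z + a^3*x*y + a^3*x^2 - 1*a^3*b*z + a^3*b*y - 2*a^3*b^2 + 2*a^4*z - 2*a^4*y - 2*a^4*b - 2*a^5) * hs2 + (-1*x*y^3 + (-3/2)*x^2*y^2 + (-1/2)*x^3*y + 2*a^3*y + a^3*x) * hsq + (-1*x*y^3 + (-3/2)*x^2*y^2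 + (-1/2)*x^3*y + a*b^2*y + (1/2)*a*b^2*x + a^2*b*y + (1/2)*a^2*b*x) * hsP
  have Cb : 3*(x*y*z - a*b*c)*(s-b)/(y-z)/(a-b)/(b-c)/(b-x) * ((-z-s)/(b-z) + (y+s)/(b-y)) = -1 := by
    field_simp
    linear_combination (-1*c*x*y^3 + (-3/2)*c*x^2*y^2 + (-1/2)*c*x^3*y + b*x*y*z^2 - 1*b*x*y^2*z + b*x*y^3 + (3/2)*b*x^2*y^2 + (1/2)*b*x^3*y - 1*b^2*y*z^2 + b^2*y^2*z - 1*b^2*x*z^2 + b^2*x*y^2 + b^3*z^2 - 1*b^3*y^2 + b^3*x*z - 1*b^3*x*y + 2*b^3*c*y + b^3*c*x - 1*b^4*z - 1*b^4*y - 1*b^4*x - 1*a*x*y*z^2 + a*x*y^2*z + a*x*y^3 + (3/2)*a*x^2*y^2 + (1/2)*a*x^3*y + 3*a*b*z*s^2 - 3*a*b*y*s^2 + a*b*y*z^2 - 1*a*b*y^2*z + a*b*x*z^2 - 1*a*b*x*y^2 - 1*a*b^2*z^2 + a*b^2*y^2 - 1*a*b^2*x*z + a*b^2*x*y - 2*a*b^3*z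 - 1*a*b^3*x) * hs1 + (-3*x*y*z*s^2 + 6*x*y^2*s^2 + 3*x^2*y*s^2 + b^2*x*y*z - 2*b^2*x*y^2 - 1*b^2*x^2*y - 2*b^3*y^2 + b^3*x*z - 1*b^3*x*y - 1*b^3*x^2 - 2*b^4*z + 2*b^4*y + 2*b^5 + a*b*x*y*z - 2*a*b*x*y^2 - 1*a*b*x^2*y - 3*a*b^2*s^2 + a*b^2*y^2 + (-1/2)*a*b^2*x*z + (1/2)*a*b^2*x*y + (1/2)*a*b^2*x^2 + a*b^3*z - 1*a*b^3*y + 2*a*b^4 + a^2*x*y*z - 2*a^2*x*y^2 - 1*a^2*x^2*y - 3*a^2*b*s^2 + a^2*b*y^2 + (-1/2)*a^2*b*x*z + (1/2)*a^2*b*x*y + (1/2)*a^2*b*x^2 + a^2*b^2*z - 1*a^2*b^2*y + 2*a^2*b^3) * hs2 + (x*y^3 + (3/2)*x^2*y^2 + (1/2)*x^3*y - 2*b^3*y - 1*b^3*x) * hsq + (x*y^3 + (3/2)*x^2*y^2 + (1/2)*x^3*y - 1*a*b^2*y + (-1/2)*a*b^2*x - 1*a^2*b*y + (-1/2)*a^2*b*x)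 * hsP
  have Cc : 3*(x*y*z - a*b*c)/(y-z)/(a-b)/(c-x) * ((-z-s)/(c-z) + (y+s)/(c-y)) * ((s-b)/(c-b) + (a-s)/(c-a)) = -1 := by
    field_simp
    linear_combination (2*b*c*x*y*z^2 - 2*b*c*x*y^2*z - 1*b*c*x*y^3 + (-3/2)*b*c*x^2*y^2 + (-1/2)*b*c*x^3*y + b*c^2*y*z^2 - 1*b*c^2*y^2*z + b*c^2*x*z^2 - 1*b*c^2*x*y^2 - 1*b*c^3*z^2 + b*c^3*y^2 - 1*b*c^3*x*z + b*c^3*x*y + b*c^4*z - 1*b*c^4*y - 1*b^2*x*y*z^2 + b^2*x*y^2*z + b^2*x*y^3 + (3/2)*b^2*x^2*y^2 + (1/2)*b^2*x^3*y - 2*b^2*c*y*z^2 + 2*b^2*c*y^2*z - 2*b^2*c*x*z^2 + 2*b^2*c*x*y^2 + 2*b^2*c^2*z^2 - 2*b^2*c^2*y^2 + 2*b^2*c^2*x*z - 2*b^2*c^2*x*y - 2*b^2*c^3*z + 2*b^2*c^3*y + 2*b^3*y*z^2 - 2*b^3*y^2*z + 2*b^3*x*z^2 - 2*b^3*x*y^2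 - 2*b^3*c*z^2 + 2*b^3*c*y^2 - 2*b^3*c*x*z + 2*b^3*c*x*y + 2*b^3*c^2*z - 2*b^3*c^2*y + 2*b^4*z^2 - 2*b^4*y^2 + 2*b^4*x*z - 2*b^4*x*y - 2*b^4*c*z - 1*b^4*c*x + 2*b^5*z + b^5*x - 2*a*c*x*y*z^2 + 2*a*c*x*y^2*z + a*c*x*y^3 + (3/2)*a*c*x^2*y^2 + (1/2)*a*c*x^3*y - 1*a*c^2*y*z^2 + a*c^2*y^2*z - 1*a*c^2*x*z^2 + a*c^2*x*y^2 + a*c^3*z^2 - 1*a*c^3*y^2 + a*c^3*x*z - 1*a*c^3*x*y - 1*a*c^4*z + a*c^4*y + 3*a*b^2*z*s^2 - 3*a*b^2*y*s^2 + 3*a*b^2*y*z^2 - 3*a*b^2*y^2*z + 3*a*b^2*x*z^2 - 3*a*b^2*x*y^2 - 3*a*b^2*c*z^2 + 3*a*b^2*c*y^2 - 3*a*b^2*c*x*z + 3*a*b^2*c*x*y + 5*a*b^3*z^2 - 5*a*b^3*y^2 + 5*a*b^3*x*z - 5*a*b^3*x*y - 2*a*b^3*c*z - 2*a*b^3*c*y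 - 2*a*b^3*c*x + 4*a*b^4*z + 2*a*b^4*y + 3*a*b^4*x + a^2*x*y*z^2 - 1*a^2*x*y^2*z - 1*a^2*x*y^3 + (-3/2)*a^2*x^2*y^2 + (-1/2)*a^2*x^3*y + 2*a^2*c*y*z^2 - 2*a^2*c*y^2*z + 2*a^2*c*x*z^2 - 2*a^2*c*x*y^2 - 2*a^2*c^2*z^2 + 2*a^2*c^2*y^2 - 2*a^2*c^2*x*z + 2*a^2*c^2*x*y + 2*a^2*c^3*z - 2*a^2*c^3*y - 3*a^2*b*z*s^2 + 3*a^2*b*y*s^2 - 3*a^2*b*y*z^2 + 3*a^2*b*y^2*z - 3*a^2*b*x*z^2 + 3*a^2*b*x*y^2 + 3*a^2*b*c*z^2 - 3*a^2*b*c*y^2 + 3*a^2*b*c*x*z - 3*a^2*b*c*x*y + 2*a^2*b^3*z + 2*a^2*b^3*y + 2*a^2*b^3*x - 2*a^3*y*z^2 + 2*a^3*y^2*z - 2*a^3*x*z^2 + 2*a^3*x*y^2 + 2*a^3*c*z^2 - 2*a^3*c*y^2 + 2*a^3*c*x*z - 2*a^3*c*x*y - 2*a^3*c^2*z + 2*a^3*c^2*y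 - 5*a^3*b*z^2 + 5*a^3*b*y^2 - 5*a^3*b*x*z + 5*a^3*b*x*y + 2*a^3*b*c*z + 2*a^3*b*c*y + 2*a^3*b*c*x - 2*a^3*b^2*z - 2*a^3*b^2*y - 2*a^3*b^2*x - 2*a^4*z^2 + 2*a^4*y^2 - 2*a^4*x*z + 2*a^4*x*y + 2*a^4*c*z + a^4*c*x - 4*a^4*b*z - 2*a^4*b*y - 3*a^4*b*x - 2*a^5*z - 1*a^5*x) * hs1 + (-3*b*x*y*z*s^2 + 6*b*x*y^2*s^2 + 3*b*x^2*y*s^2 + b^3*x*y*z - 2*b^3*x*y^2 - 1*b^3*x^2*y + 2*b^4*y^2 - 1*b^4*x*z + b^4*x*y + b^4*x^2 - 2*b^5*z + 2*b^5*y - 2*b^6 + 3*a*x*y*z*s^2 - 6*a*x*y^2*s^2 - 3*a*x^2*y*s^2 - 3*a*b^3*s^2 + 5*a*b^3*y^2 + (-5/2)*a*b^3*x*z + (5/2)*a*b^3*x*y + (5/2)*a*b^3*x^2 - 7*a*b^4*z + 7*a*b^4*y - 6*a*b^5 - 5*a^2*b^3*z + 5*a^2*b^3*y - 6*a^2*b^4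 - 1*a^3*x*y*z + 2*a^3*x*y^2 + a^3*x^2*y + 3*a^3*b*s^2 - 5*a^3*b*y^2 + (5/2)*a^3*b*x*z + (-5/2)*a^3*b*x*y + (-5/2)*a^3*b*x^2 + 5*a^3*b^2*z - 5*a^3*b^2*y - 2*a^4*y^2 + a^4*x*z - 1*a^4*x*y - 1*a^4*x^2 + 7*a^4*b*z - 7*a^4*b*y + 6*a^4*b^2 + 2*a^5*z - 2*a^5*y + 6*a^5*b + 2*a^6) * hs2 + (b*x*y^3 + (3/2)*b*x^2*y^2 + (1/2)*b*x^3*y + 2*b^4*y + b^4*x - 1*a*x*y^3 + (-3/2)*a*x^2*y^2 + (-1/2)*a*x^3*y + 4*a*b^3*y + 2*a*b^3*x - 4*a^3*b*y - 2*a^3*b*x - 2*a^4*y - 1*a^4*x) * hsq + (b*x*y^3 + (3/2)*b*x^2*y^2 + (1/2)*b*x^3*y - 1*a*x*y^3 + (-3/2)*a*x^2*y^2 + (-1/2)*a*x^3*y - 1*a*b^3*y + (-1/2)*a*b^3*x + a^3*b*y + (1/2)*a^3*b*x) * hsP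
  simp only [E4]
  linear_combination -Real.exp x * Cx - Real.exp y * Cy - Real.exp z * Cz
    - Real.exp a * Ca - Real.exp b * Cb - Real.exp c * Cc

lemma ident2 (a b c x y : ℝ)
    (hs1 : a + b + c = 0) (hx : x + 2*y = 0)
    (hsq : a^2 + b^2 + c^2 = x^2 + 2*y^2)
    (h1 : c < y) (h3 : y < b) (h4 : b < a) (h5 : a < x) :
    Real.exp x + 2*Real.exp y - (Real.exp a + Real.exp b + Real.exp c)
      = 3*(x*y*y - a*b*c)/(a-b) *
        ( (-y-b) * E4 c y b x + (a+y) * E4 c y a x ) := by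
  have ne0a : y - c ≠ 0 := sub_ne_zero.mpr (by linarith : c < y).ne'
  have ne0b : c - y ≠ 0 := sub_ne_zero.mpr (by linarith : c < y).ne
  have ne1a : b - c ≠ 0 := sub_ne_zero.mpr (by linarith : c < b).ne'
  have ne1b : c - b ≠ 0 := sub_ne_zero.mpr (by linarith : c < b).ne
  have ne2a : a - c ≠ 0 := sub_ne_zero.mpr (by linarith : c < a).ne'
  have ne2b : c - a ≠ 0 := sub_ne_zero.mpr (by linarith : c < a).ne
  have ne3a : x - c ≠ 0 := sub_ne_zero.mpr (by linarith : c < x).ne'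
  have ne3b : c - x ≠ 0 := sub_ne_zero.mpr (by linarith : c < x).ne
  have ne4a : b - y ≠ 0 := sub_ne_zero.mpr (by linarith : y < b).ne'
  have ne4b : y - b ≠ 0 := sub_ne_zero.mpr (by linarith : y < b).ne
  have ne5a : a - y ≠ 0 := sub_ne_zero.mpr (by linarith : y < a).ne'
  have ne5b : y - a ≠ 0 := sub_ne_zero.mpr (by linarith : y < a).ne
  have ne6a : x - y ≠ 0 := sub_ne_zero.mpr (by linarith : y < x).ne'
  have ne6b : y - x ≠ 0 := sub_ne_zero.mpr (by linarith : y < x).ne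
  have ne7a : a - b ≠ 0 := sub_ne_zero.mpr (by linarith : b < a).ne'
  have ne7b : b - a ≠ 0 := sub_ne_zero.mpr (by linarith : b < a).ne
  have ne8a : x - b ≠ 0 := sub_ne_zero.mpr (by linarith : b < x).ne'
  have ne8b : b - x ≠ 0 := sub_ne_zero.mpr (by linarith : b < x).ne
  have ne9a : x - a ≠ 0 := sub_ne_zero.mpr (by linarith : a < x).ne'
  have ne9b : a - x ≠ 0 := sub_ne_zero.mpr (by linarith : a < x).ne
  have Cx : 3*(x*y*y - a*b*c)/(a-b)/(x-c)/(x-y) * ((-y-b)/(x-b) + (a+y)/(x-a)) = 1 := by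
    field_simp
    linear_combination (b*x^2*y - 1*b*x^3 + 3*b*c*y^2 - 3*b^2*y^2 - 1*b^2*x*y + b^2*x^2 - 1*a*x^2*y + a*x^3 - 3*a*c*y^2 + 4*a*b^2*y + 2*a*b^2*x + 3*a^2*y^2 + a^2*x*y - 1*a^2*x^2 - 4*a^2*b*y - 2*a^2*b*x) * hs1 + (-3*b*y^3 - 3*b*x^2*y + b*x^3 + 3*b^3*y - 1*b^3*x + 3*a*y^3 + 3*a*x^2*y - 1*a*x^3 - 2*a*b^3 - 3*a^3*y + a^3*x + 2*a^3*b) * hx + (-3*b*y^2 + 3*a*y^2) * hsq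
  have Cy : 3*(x*y*y - a*b*c)/(a-b)/(y-c)/(y-x) * ((-y-b)/(y-b) + (a+y)/(y-a)) = 2 := by
    field_simp
    linear_combination (-2*b*y^3 + 2*b*x*y^2 + 3*b*c*y^2 - 1*b^2*y^2 - 2*b^2*x*y + 2*a*y^3 - 2*a*x*y^2 - 3*a*c*y^2 + 4*a*b^2*y + 2*a*b^2*x + a^2*y^2 + 2*a^2*x*y - 4*a^2*b*y - 2*a^2*b*x) * hs1 + (-2*b*y^3 - 3*b*x*y^2 + 2*b^3*y + 2*a*y^3 + 3*a*x*y^2 - 2*a*b^3 - 2*a^3*y + 2*a^3*b) * hx + (-3*b*y^2 + 3*a*y^2) * hsq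
  have Ca : 3*(x*y*y - a*b*c)*(a+y)/(a-b)/(a-c)/(a-y)/(a-x) = -1 := by
    field_simp
    linear_combination (-1*c*y^2 + b*y^2 + b*x*y + a*y^2 - 1*a*x*y - 1*a*c*y - 3*a*b*y - 1*a*b*x + 2*a^2*y + a^2*x - 1*a^2*c - 1*a^2*b) * hs1 + (y^3 + x*y^2 - 1*b^2*y + a*y^2 + a*x*y - 1*a*b*y + a*b^2 + a^2*x + a^2*b - 2*a^3) * hx + (y^2 + a*y + a^2) * hsq
  have Cb : 3*(x*y*y - a*b*c)*(-y-b)/(a-b)/(b-c)/(b-y)/(b-x) = -1 := by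
    field_simp
    linear_combination (c*y^2 - 1*b*y^2 + b*x*y + b*c*y - 2*b^2*y - 1*b^2*x + b^2*c - 1*a*y^2 - 1*a*x*y + 3*a*b*y + a*b*x + a*b^2) * hs1 + (-1*y^3 - 1*x*y^2 - 1*b*y^2 - 1*b*x*y - 1*b^2*x + 2*b^3 + a*b*y - 1*a*b^2 + a^2*y - 1*a^2*b) * hx + (-1*y^2 - 1*b*y - 1*b^2) * hsq
  have Cc : 3*(x*y*y - a*b*c)/(a-b)/(c-y)/(c-x) * ((-y-b)/(c-b) + (a+y)/(c-a)) = -1 := by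
    field_simp
    linear_combination (-3*b*x*y^2 + b*c*y^2 - 1*b*c*x*y + b*c^2*y + b*c^2*x - 1*b*c^3 - 1*b^2*y^2 + 2*b^2*x*y - 3*b^2*c*y - 2*b^2*c*x + 2*b^2*c^2 + 3*b^3*y + 2*b^3*x - 1*b^3*c + b^4 + 3*a*x*y^2 - 1*a*c*y^2 + a*c*x*y - 1*a*c^2*y - 1*a*c^2*x + a*c^3 + 7*a*b^2*y + 3*a*b^2*x + a*b^2*c + a^2*y^2 - 2*a^2*x*y + 3*a^2*c*y + 2*a^2*c*x - 2*a^2*c^2 - 7*a^2*b*y - 3*a^2*b*x - 1*a^2*b*c - 3*a^3*y - 2*a^3*x + a^3*c - 1*a^4) * hs1 + (-1*b*y^3 - 1*b*x*y^2 + b^2*y^2 + b^2*x*y - 1*b^3*x - 2*b^4 + a*y^3 + a*x*y^2 - 1*a*b^2*y - 1*a*b^2*x - 5*a*b^3 - 1*a^2*y^2 - 1*a^2*x*y + a^2*b*y + a^2*b*x + a^3*x + 5*a^3*b + 2*a^4) * hx + (-1*b*y^2 + b^2*y - 1*b^3 + a*y^2 - 1*a*b^2 - 1*a^2*y + a^2*b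 + a^3) * hsq
  simp only [E4]
  linear_combination -Real.exp x * Cx - Real.exp y * Cy
    - Real.exp a * Ca - Real.exp b * Cb - Real.exp c * Cc

lemma ident3 (a c x y z : ℝ)
    (hca : c + 2*a = 0) (hs2 : x + y + z = 0)
    (hsq : 2*a^2 + c^2 = x^2 + y^2 + z^2)
    (h1 : c < z) (h2 : z < y) (h3 : y < a) (h5 : a < x) :
    Real.exp x + Real.exp y + Real.exp z - (2*Real.exp a + Real.exp c)
      = 3*(x*y*z - a*a*c)/(y-z) *
        ( (-z-a) * E4 c z a x + (y+a) * E4 c y a x ) := by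
  have ne0a : z - c ≠ 0 := sub_ne_zero.mpr (by linarith : c < z).ne'
  have ne0b : c - z ≠ 0 := sub_ne_zero.mpr (by linarith : c < z).ne
  have ne1a : y - c ≠ 0 := sub_ne_zero.mpr (by linarith : c < y).ne'
  have ne1b : c - y ≠ 0 := sub_ne_zero.mpr (by linarith : c < y).ne
  have ne2a : a - c ≠ 0 := sub_ne_zero.mpr (by linarith : c < a).ne'
  have ne2b : c - a ≠ 0 := sub_ne_zero.mpr (by linarith : c < a).ne
  have ne3a : x - c ≠ 0 := sub_ne_zero.mpr (by linarith : c < x).ne'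
  have ne3b : c - x ≠ 0 := sub_ne_zero.mpr (by linarith : c < x).ne
  have ne4a : y - z ≠ 0 := sub_ne_zero.mpr (by linarith : z < y).ne'
  have ne4b : z - y ≠ 0 := sub_ne_zero.mpr (by linarith : z < y).ne
  have ne5a : a - z ≠ 0 := sub_ne_zero.mpr (by linarith : z < a).ne'
  have ne5b : z - a ≠ 0 := sub_ne_zero.mpr (by linarith : z < a).ne
  have ne6a : x - z ≠ 0 := sub_ne_zero.mpr (by linarith : z < x).ne'
  have ne6b : z - x ≠ 0 := sub_ne_zero.mpr (by linarith : z < x).ne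
  have ne7a : a - y ≠ 0 := sub_ne_zero.mpr (by linarith : y < a).ne'
  have ne7b : y - a ≠ 0 := sub_ne_zero.mpr (by linarith : y < a).ne
  have ne8a : x - y ≠ 0 := sub_ne_zero.mpr (by linarith : y < x).ne'
  have ne8b : y - x ≠ 0 := sub_ne_zero.mpr (by linarith : y < x).ne
  have ne9a : x - a ≠ 0 := sub_ne_zero.mpr (by linarith : a < x).ne'
  have ne9b : a - x ≠ 0 := sub_ne_zero.mpr (by linarith : a < x).ne
  have Cx : 3*(x*y*z - a*a*c)/(y-z)/(x-c)/(x-a) * ((-z-a)/(x-z) + (y+a)/(x-y)) = 1 := by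
    field_simp
    linear_combination (-1*x*y*z^2 + x*y^2*z + x^2*z^2 - 1*x^2*y^2 - 1*x^3*z + x^3*y - 2*c*x^2*y - 1*c*x^3 + a*y*z^2 - 1*a*y^2*z - 1*a*x*z^2 + a*x*y^2 + a*x^2*z + 3*a*x^2*y + 2*a*x^3 - 2*a*c*x*y - 1*a*c*x^2 + 3*a^2*x*z + a^2*x*y + 2*a^2*x^2 - 2*a^2*c*y - 1*a^2*c*x + 3*a^3*z + a^3*y + 2*a^3*x) * hca + (2*x^2*y^2 + x^4 + 2*a*x*y^2 + a*x^3 + 2*a^2*y^2 + 3*a^2*x*z - 3*a^2*x*y - 5*a^2*x^2 - 6*a^3*x - 6*a^4) * hs2 + (2*x^2*y + x^3 + 2*a*x*y + a*x^2 + 2*a^2*y + a^2*x) * hsq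
  have Cy : 3*(x*y*z - a*a*c)*(y+a)/(y-z)/(y-c)/(y-a)/(y-x) = 1 := by
    field_simp
    linear_combination (-1*y^2*z + y^3 + x*y*z - 1*x*y^2 - 1*c*y^2 + a*y*z + a*y^2 - 1*a*x*z + a*x*y - 1*a*c*y - 1*a^2*y - 1*a^2*c - 1*a^3) * hca + (y^2*z + x*y^2 + a*y*z + a*x*y + a^2*z - 3*a^2*y + a^2*x) * hs2 + (y^2 + a*y + a^2) * hsq
  have Cz : 3*(x*y*z - a*a*c)*(-z-a)/(y-z)/(z-c)/(z-a)/(z-x) = 1 := by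
    field_simp
    linear_combination (-1*z^3 + y*z^2 + x*z^2 - 1*x*y*z + c*y^2 + 2*c*x*y + c*x^2 + a*z^2 - 1*a*y*z - 2*a*y^2 - 1*a*x*z - 3*a*x*y - 2*a*x^2 - 1*a*c*y - 1*a*c*x + 3*a^2*z + 2*a^2*y + 2*a^2*x + a^2*c + a^3) * hca + (z^3 - 2*y*z^2 + y^2*z - 1*y^3 - 2*x*z^2 - 1*x*y^2 + x^2*z - 1*x^2*y - 1*x^3 + a*z^2 - 1*a*y*z + a*y^2 - 1*a*x*z + a*x^2 - 3*a^2*z + 5*a^2*y + 5*a^2*x - 6*a^3) * hs2 + (-1*y^2 - 2*x*y - 1*x^2 + a*y + a*x - 1*a^2) * hsq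
  have Ca : 3*(x*y*z - a*a*c)/(y-z)/(a-c)/(a-x) * ((-z-a)/(a-z) + (y+a)/(a-y)) = -2 := by
    field_simp
    linear_combination (-2*x*y*z^2 + 2*x*y^2*z + 2*a*y*z^2 - 2*a*y^2*z + 2*a*x*z^2 - 2*a*x*y^2 - 2*a^2*z^2 + 2*a^2*y^2 - 2*a^2*x*z + 2*a^2*x*y - 6*a^2*c*y - 3*a^2*c*x + 8*a^3*z + 4*a^3*y + 6*a^3*x) * hca + (6*a^2*y^2 - 3*a^2*x*z + 3*a^2*x*y + 3*a^2*x^2 + 6*a^3*z - 6*a^3*y - 18*a^4) * hs2 + (6*a^2*y + 3*a^2*x) * hsq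
  have Cc : 3*(x*y*z - a*a*c)/(y-z)/(c-a)/(c-x) * ((-z-a)/(c-z) + (y+a)/(c-y)) = -1 := by
    field_simp
    linear_combination (-2*x*y*z^2 + 2*x*y^2*z - 1*c*y*z^2 + c*y^2*z - 1*c*x*z^2 + c*x*y^2 + c^2*z^2 - 1*c^2*y^2 + c^2*x*z - 1*c^2*x*y - 1*c^3*z + c^3*y + 3*a*y*z^2 - 3*a*y^2*z + 3*a*x*z^2 - 3*a*x*y^2 - 3*a*c*z^2 + 3*a*c*y^2 - 3*a*c*x*z + 3*a*c*x*y + 3*a*c^2*z - 3*a*c^2*y + 6*a^2*z^2 - 6*a^2*y^2 + 6*a^2*x*z - 6*a^2*x*y - 3*a^2*c*z - 3*a^2*c*y - 3*a^2*c*x + 9*a^3*z + 3*a^3*y + 6*a^3*x) * hca + (6*a^2*y^2 - 3*a^2*x*z + 3*a^2*x*y + 3*a^2*x^2 - 12*a^3*z + 12*a^3*y - 18*a^4) * hs2 + (6*a^2*y + 3*a^2*x) * hsq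
  simp only [E4]
  linear_combination -Real.exp x * Cx - Real.exp y * Cy - Real.exp z * Cz
    - Real.exp a * Ca - Real.exp c * Cc

lemma ident4 (a : ℝ) (ha : 0 < a) :
    Real.exp (2*a) + 2*Real.exp (-a) - (2*Real.exp a + Real.exp (-(2*a)))
      = 12*a^3 * E4 (-(2*a)) (-a) a (2*a) := by
  have h1 : a ≠ 0 := ha.ne'
  simp only [E4]
  rw [show -(2*a) - -a = -a by ring, show -(2*a) - a = -(3*a) by ring,
      show -(2*a) - 2*a = -(4*a) by ring, show -a - -(2*a) = a by ring,
      show -a - a = -(2*a) by ring, show -a - 2*a = -(3*a) by ring,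
      show a - -(2*a) = 3*a by ring, show a - -a = 2*a by ring,
      show a - 2*a = -a by ring, show 2*a - -(2*a) = 4*a by ring,
      show 2*a - -a = 3*a by ring, show (2*a) - a = a by ring]
  field_simp
  ring

lemma sum_lt (a b c x y z : ℝ)
    (hab : a ≥ b) (hbc : b ≥ c) (hxy : x ≥ y) (hyz : y ≥ z)
    (hs1 : a + b + c = 0) (hs2 : x + y + z = 0)
    (hsq : a^2 + b^2 + c^2 = x^2 + y^2 + z^2)
    (hm : a*b*c < x*y*z) :
    Real.exp a + Real.exp b + Real.exp c < Real.exp x + Real.exp y + Real.exp z := by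
  have gx : (x-a)*(x-b)*(x-c) = x*y*z - a*b*c := by
    linear_combination (-1*x^2 + (1/2)*c*x + (1/2)*b*x + (1/2)*a*x) * hs1 + ((-1/2)*x*z + (-1/2)*x*y + (1/2)*x^2) * hs2 + ((-1/2)*x) * hsq
  have gy : (y-a)*(y-b)*(y-c) = x*y*z - a*b*c := by
    linear_combination (-1*y^2 + (1/2)*c*y + (1/2)*b*y + (1/2)*a*y) * hs1 + ((-1/2)*y*z + (1/2)*y^2 + (-1/2)*x*y) * hs2 + ((-1/2)*y) * hsq
  have gz : (z-a)*(z-b)*(z-c) = x*y*z - a*b*c := by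
    linear_combination (-1*z^2 + (-1/2)*c*y + (-1/2)*c*x + b*z + (1/2)*b*y + (1/2)*b*x + a*z + (1/2)*a*y + (1/2)*a*x) * hs1 + (z^2 + (-1/2)*y*z + (1/2)*y^2 + (-1/2)*x*z + (1/2)*x^2 - 1*b^2 - 1*a*b - 1*a^2) * hs2 + ((1/2)*y + (1/2)*x) * hsq
  have ga : (a-x)*(a-y)*(a-z) = a*b*c - x*y*z := by
    linear_combination ((-1/2)*a*c + (-1/2)*a*b + (1/2)*a^2) * hs1 + ((1/2)*a*z + (1/2)*a*y + (1/2)*a*x - 1*a^2) * hs2 + ((1/2)*a) * hsq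
  have ha0 : 0 ≤ a := by linarith
  have hx0 : 0 ≤ x := by linarith
  have hc0 : c ≤ 0 := by linarith
  have hz0 : z ≤ 0 := by linarith
  -- interlacing
  have hax : a < x := by
    by_contra hh
    push_neg at hh
    nlinarith [mul_nonneg (mul_nonneg (by linarith : (0:ℝ) ≤ a-x) (by linarith : (0:ℝ) ≤ a-y)) (by linarith : (0:ℝ) ≤ a-z)]
  have hcz : c < z := by
    by_contra hh
    push_neg at hh
    nlinarith [mul_nonneg (mul_nonneg (by linarith : (0:ℝ) ≤ a-z) (by linarith : (0:ℝ) ≤ b-z)) (by linarith : (0:ℝ) ≤ c-z)]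
  have hyb : y < b := by
    by_contra hh
    push_neg at hh  -- b ≤ y
    have hya : a < y := by
      by_contra h2
      push_neg at h2
      nlinarith [mul_nonneg (by linarith : (0:ℝ) ≤ y-b) (by linarith : (0:ℝ) ≤ y-c)]
    have haz : a < z := by
      by_contra h3
      push_neg at h3
      nlinarith [mul_nonneg (mul_nonneg (by linarith : (0:ℝ) ≤ x-a) (by linarith : (0:ℝ) ≤ y-a)) (by linarith : (0:ℝ) ≤ a-z)]
    linarith
  -- s and bounds
  set s := Real.sqrt ((x^2+y^2+z^2)/6) with hsdef
  have hs0 : 0 ≤ s := Real.sqrt_nonneg _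
  have hs2' : s^2 = (x^2+y^2+z^2)/6 := Real.sq_sqrt (by positivity)
  have hsP : x^2+y^2+z^2 = 6*s^2 := by linarith
  have hsqa : a^2+b^2+c^2 = 6*s^2 := by linarith
  have hbs : b ≤ s := by nlinarith [mul_nonneg (by linarith : (0:ℝ) ≤ a-b) (by linarith : (0:ℝ) ≤ b-c)]
  have has : s ≤ a := by nlinarith [mul_nonneg (by linarith : (0:ℝ) ≤ a-b) (by linarith : (0:ℝ) ≤ a-c)]
  have hys : -s ≤ y := by nlinarith [mul_nonneg (by linarith : (0:ℝ) ≤ x-y) (by linarith : (0:ℝ) ≤ y-z)]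
  have hzs : z ≤ -s := by nlinarith [mul_nonneg (by linarith : (0:ℝ) ≤ y-z) (by linarith : (0:ℝ) ≤ x-z)]
  rcases eq_or_lt_of_le hyz with hzy | hzy
  · -- z = y
    subst hzy
    have hsy : s = -z := by linarith
    rcases eq_or_lt_of_le hab with hba | hba
    · -- b = a : both ties
      subst hba
      have hya : z = -b := by linarith
      have hc2 : c = -(2*b) := by linarith
      have hx2 : x = 2*b := by linarith
      have hb0 : 0 < b := by linarith
      have id := ident4 b hb0
      have Ep : 0 < E4 (-(2*b)) (-b) b (2*b) :=
        E4_pos _ _ _ _ (by linarith) (by linarith) (by linarith)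
      have h12 : 0 < 12*b^3 := by positivity
      rw [hc2, hx2, hya]
      nlinarith [mul_pos h12 Ep, id]
    · -- b < a, z = y
      have id := ident2 a b c x z hs1 (by linarith) (by linarith) (by linarith) hyb hba hax
      have E3 : 0 < E4 c z b x := E4_pos _ _ _ _ hcz (by linarith) (by linarith)
      have E4' : 0 < E4 c z a x := E4_pos _ _ _ _ hcz (by linarith) (by linarith)
      have w3 : 0 ≤ -z-b := by linarith
      have w4 : 0 ≤ a+z := by linarith
      have hm1 : min (E4 c z b x) (E4 c z a x) ≤ E4 c z b x := min_le_left _ _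
      have hm2 : min (E4 c z b x) (E4 c z a x) ≤ E4 c z a x := min_le_right _ _
      have hm0 : 0 < min (E4 c z b x) (E4 c z a x) := lt_min E3 E4'
      have h1' := mul_le_mul_of_nonneg_left hm1 w3
      have h2' := mul_le_mul_of_nonneg_left hm2 w4
      have hpos : 0 < (a-b) * min (E4 c z b x) (E4 c z a x) :=
        mul_pos (by linarith) hm0
      have hr : (-z-b) * min (E4 c z b x) (E4 c z a x) + (a+z) * min (E4 c z b x) (E4 c z a x)
          = (a-b) * min (E4 c z b x) (E4 c z a x) := by ring
      have hB : 0 < (-z-b) * E4 c z b x + (a+z) * E4 c z a x := by linarith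
      have hfac : 0 < 3*(x*z*z - a*b*c)/(a-b) := div_pos (by linarith) (by linarith)
      linarith [mul_pos hfac hB, id]
  · rcases eq_or_lt_of_le hab with hba | hba
    · -- b = a, z < y
      subst hba
      have hsa : s = b := le_antisymm has hbs
      have id := ident3 b c x y z (by linarith) hs2 (by linarith) hcz hzy hyb hax
      have E2 : 0 < E4 c z b x := E4_pos _ _ _ _ hcz (by linarith) (by linarith)
      have E3 : 0 < E4 c y b x := E4_pos _ _ _ _ (by linarith) (by linarith) (by linarith)
      have w1 : 0 ≤ -z-b := by linarith
      have w2 : 0 ≤ y+b := by linarith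
      have hm1 : min (E4 c z b x) (E4 c y b x) ≤ E4 c z b x := min_le_left _ _
      have hm2 : min (E4 c z b x) (E4 c y b x) ≤ E4 c y b x := min_le_right _ _
      have hm0 : 0 < min (E4 c z b x) (E4 c y b x) := lt_min E2 E3
      have h1' := mul_le_mul_of_nonneg_left hm1 w1
      have h2' := mul_le_mul_of_nonneg_left hm2 w2
      have hpos : 0 < (y-z) * min (E4 c z b x) (E4 c y b x) := mul_pos (by linarith) hm0
      have hr : (-z-b) * min (E4 c z b x) (E4 c y b x) + (y+b) * min (E4 c z b x) (E4 c y b x)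
          = (y-z) * min (E4 c z b x) (E4 c y b x) := by ring
      have hB : 0 < (-z-b) * E4 c z b x + (y+b) * E4 c y b x := by linarith
      have hfac : 0 < 3*(x*y*z - b*b*c)/(y-z) := div_pos (by linarith) (by linarith)
      linarith [mul_pos hfac hB, id]
    · -- generic case : z < y, b < a
      have id := ident1 a b c x y z s hs1 hs2 hsq hsP hcz hzy hyb hba hax
      have E1 : 0 < E4 c z b x := E4_pos _ _ _ _ hcz (by linarith) (by linarith)
      have E2 : 0 < E4 c z a x := E4_pos _ _ _ _ hcz (by linarith) (by linarith)
      have E3 : 0 < E4 c y b x := E4_pos _ _ _ _ (by linarith) (by linarith) (by linarith)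
      have E4' : 0 < E4 c y a x := E4_pos _ _ _ _ (by linarith) (by linarith) (by linarith)
      have w1 : 0 ≤ -z-s := by linarith
      have w2 : 0 ≤ y+s := by linarith
      have w3 : 0 ≤ s-b := by linarith
      have w4 : 0 ≤ a-s := by linarith
      set m := min (min (E4 c z b x) (E4 c z a x)) (min (E4 c y b x) (E4 c y a x)) with hmdef
      have hm0 : 0 < m := lt_min (lt_min E1 E2) (lt_min E3 E4')
      have hm1 : m ≤ E4 c z b x := le_trans (min_le_left _ _) (min_le_left _ _)
      have hm2 : m ≤ E4 c z a x := le_trans (min_le_left _ _) (min_le_right _ _)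
      have hm3 : m ≤ E4 c y b x := le_trans (min_le_right _ _) (min_le_left _ _)
      have hm4 : m ≤ E4 c y a x := le_trans (min_le_right _ _) (min_le_right _ _)
      have h1' := mul_le_mul_of_nonneg_left hm1 (mul_nonneg w1 w3)
      have h2' := mul_le_mul_of_nonneg_left hm2 (mul_nonneg w1 w4)
      have h3' := mul_le_mul_of_nonneg_left hm3 (mul_nonneg w2 w3)
      have h4' := mul_le_mul_of_nonneg_left hm4 (mul_nonneg w2 w4)
      have hpos : 0 < ((y-z)*(a-b)) * m :=
        mul_pos (mul_pos (by linarith) (by linarith)) hm0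
      have hr : ((-z-s)*(s-b)) * m + ((-z-s)*(a-s)) * m + ((y+s)*(s-b)) * m + ((y+s)*(a-s)) * m
          = ((y-z)*(a-b)) * m := by ring
      have hB : 0 < (-z-s)*(s-b) * E4 c z b x + (-z-s)*(a-s) * E4 c z a x
          + (y+s)*(s-b) * E4 c y b x + (y+s)*(a-s) * E4 c y a x := by linarith
      have hfac : 0 < 3*(x*y*z - a*b*c)/(y-z)/(a-b) :=
        div_pos (div_pos (by linarith) (by linarith)) (by linarith)
      linarith [mul_pos hfac hB, id]

lemma triple_eq (a b c x y z : ℝ)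
    (hab : a ≥ b) (hbc : b ≥ c) (hxy : x ≥ y) (hyz : y ≥ z)
    (hs1 : a + b + c = 0) (hs2 : x + y + z = 0)
    (hsq : a^2 + b^2 + c^2 = x^2 + y^2 + z^2)
    (hm : a*b*c = x*y*z) :
    a = x ∧ b = y ∧ c = z := by
  have ga : (a-x)*(a-y)*(a-z) = a*b*c - x*y*z := by
    linear_combination ((-1/2)*a*c + (-1/2)*a*b + (1/2)*a^2) * hs1 + ((1/2)*a*z + (1/2)*a*y + (1/2)*a*x - 1*a^2) * hs2 + ((1/2)*a) * hsq
  have gc : (c-x)*(c-y)*(c-z) = a*b*c - x*y*z := by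
    linear_combination (y*z + x*z + x*y - 1*c*z - 1*c*y - 1*c*x + c^2 + b*z + b*y + b*x + (-1/2)*b*c + (1/2)*b^2 + a*z + a*y + a*x + (-1/2)*a*c + (1/2)*a^2) * hs1 + ((-1/2)*b*z + (-1/2)*b*y + (-1/2)*b*x - 1*b^2 + (-1/2)*a*z + (-1/2)*a*y + (-1/2)*a*x - 2*a*b - 1*a^2) * hs2 + ((-1/2)*b + (-1/2)*a) * hsq
  have gx : (x-a)*(x-b)*(x-c) = x*y*z - a*b*c := by
    linear_combination (-1*x^2 + (1/2)*c*x + (1/2)*b*x + (1/2)*a*x) * hs1 + ((-1/2)*x*z + (-1/2)*x*y + (1/2)*x^2) * hs2 + ((-1/2)*x) * hsq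
  have gz : (z-a)*(z-b)*(z-c) = x*y*z - a*b*c := by
    linear_combination (-1*z^2 + (-1/2)*c*y + (-1/2)*c*x + b*z + (1/2)*b*y + (1/2)*b*x + a*z + (1/2)*a*y + (1/2)*a*x) * hs1 + (z^2 + (-1/2)*y*z + (1/2)*y^2 + (-1/2)*x*z + (1/2)*x^2 - 1*b^2 - 1*a*b - 1*a^2) * hs2 + ((1/2)*y + (1/2)*x) * hsq
  rw [hm, sub_self] at ga gc gx gz
  have hax : a ≤ x := by
    rcases mul_eq_zero.mp ga with h | h
    · rcases mul_eq_zero.mp h with h' | h'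
      · linarith [sub_eq_zero.mp h']
      · linarith [sub_eq_zero.mp h']
    · linarith [sub_eq_zero.mp h]
  have hxa : x ≤ a := by
    rcases mul_eq_zero.mp gx with h | h
    · rcases mul_eq_zero.mp h with h' | h'
      · linarith [sub_eq_zero.mp h']
      · linarith [sub_eq_zero.mp h']
    · linarith [sub_eq_zero.mp h]
  have hcz : z ≤ c := by
    rcases mul_eq_zero.mp gc with h | h
    · rcases mul_eq_zero.mp h with h' | h'
      · linarith [sub_eq_zero.mp h']
      · linarith [sub_eq_zero.mp h']
    · linarith [sub_eq_zero.mp h]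
  have hzc : c ≤ z := by
    rcases mul_eq_zero.mp gz with h | h
    · rcases mul_eq_zero.mp h with h' | h'
      · linarith [sub_eq_zero.mp h']
      · linarith [sub_eq_zero.mp h']
    · linarith [sub_eq_zero.mp h]
  refine ⟨le_antisymm hax hxa, by linarith, le_antisymm hzc hcz⟩

lemma sum_le (a b c x y z : ℝ)
    (hab : a ≥ b) (hbc : b ≥ c) (hxy : x ≥ y) (hyz : y ≥ z)
    (hs1 : a + b + c = 0) (hs2 : x + y + z = 0)
    (hsq : a^2 + b^2 + c^2 = x^2 + y^2 + z^2)
    (hm : a*b*c ≤ x*y*z) :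
    Real.exp a + Real.exp b + Real.exp c ≤ Real.exp x + Real.exp y + Real.exp z := by
  rcases eq_or_lt_of_le hm with h | h
  · obtain ⟨h1, h2, h3⟩ := triple_eq a b c x y z hab hbc hxy hyz hs1 hs2 hsq h
    rw [h1, h2, h3]
  · exact (sum_lt a b c x y z hab hbc hxy hyz hs1 hs2 hsq h).le

theorem stmt_5 (a b c x y z : ℝ)
    (hab : a ≥ b) (hbc : b ≥ c) (hxy : x ≥ y) (hyz : y ≥ z)
    (hs1 : a + b + c = 0) (hs2 : x + y + z = 0)
    (hsq : a^2 + b^2 + c^2 = x^2 + y^2 + z^2) :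
    (Real.exp a + Real.exp b + Real.exp c ≤ Real.exp x + Real.exp y + Real.exp z ∨
     Real.exp (-a) + Real.exp (-b) + Real.exp (-c) ≤ Real.exp (-x) + Real.exp (-y) + Real.exp (-z)) ∧
    ((Real.exp a + Real.exp b + Real.exp c ≤ Real.exp x + Real.exp y + Real.exp z ∧
      Real.exp (-a) + Real.exp (-b) + Real.exp (-c) ≤ Real.exp (-x) + Real.exp (-y) + Real.exp (-z))
      ↔ (a = x ∧ b = y ∧ c = z)) := by
  constructor
  · rcases le_or_gt (a*b*c) (x*y*z) with h | h
    · exact Or.inl (sum_le a b c x y z hab hbc hxy hyz hs1 hs2 hsq h)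
    · refine Or.inr ?_
      have := sum_le (-c) (-b) (-a) (-z) (-y) (-x)
        (by linarith) (by linarith) (by linarith) (by linarith)
        (by linarith) (by linarith) (by ring_nf; linarith [hsq]) (by nlinarith)
      linarith
  · constructor
    · rintro ⟨hle1, hle2⟩
      rcases lt_trichotomy (a*b*c) (x*y*z) with h | h | h
      · -- strictly: exp(-x)-sum < exp(-a)-sum, contradicting hle2
        exfalso
        have := sum_lt (-z) (-y) (-x) (-c) (-b) (-a)
          (by linarith) (by linarith) (by linarith) (by linarith)
          (by linarith) (by linarith) (by ring_nf; linarith [hsq]) (by nlinarith)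
        linarith
      · exact triple_eq a b c x y z hab hbc hxy hyz hs1 hs2 hsq h
      · exfalso
        have := sum_lt x y z a b c hxy hyz hab hbc hs2 hs1 hsq.symm h
        linarith
    · rintro ⟨h1, h2, h3⟩
      subst h1; subst h2; subst h3
      exact ⟨le_refl _, le_refl _⟩
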